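/- The series ∑_{m=0}^∞ (i t B)^m / m! · ad_{J_{n_θ^{(3)}}}^m (J_{n_φ'}) converges (in any matrix norm) and satisfies ∑_{m=0}^∞ (i t B)^m / m! · ad_{J_{n_θ^{(3)}}}^m (J_{n_φ'}) − J_{n_φ'} = 2 sin(Bt/2) · J_{n₁^{(3)}}. (This gives the closed form 𝓗_θ = 2 sin(Bt/2) J_{n₁^{(3)}} for the three-parameter su(2) encoding.) -/

import Mathlib

open scoped BigOperators

/-- The series `∑ (itB)^m/m! • ad_{J_{n_θ³}}^m (J_{n_φ'})` converges, and its sum minus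
`J_{n_φ'}` equals `2 sin(Bt/2) • J_{n₁³}`: the closed form for `𝓗_θ` of the
three-parameter su(2) encoding. -/
theorem su2_H_theta_three_param
    (N : ℕ) (hN : 0 < N)
    (Jx Jy Jz : Matrix (Fin N) (Fin N) ℂ)
    (hxy : Jx * Jy - Jy * Jx = Complex.I • Jz)
    (hyz : Jy * Jz - Jz * Jy = Complex.I • Jx)
    (hzx : Jz * Jx - Jx * Jz = Complex.I • Jy)
    (J : (Fin 3 → ℝ) → Matrix (Fin N) (Fin N) ℂ)
    (hJ : ∀ v : Fin 3 → ℝ, J v = (v 0 : ℂ) • Jx + (v 1 : ℂ) • Jy + (v 2 : ℂ) • Jz)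
    (B θ φ t : ℝ)
    (nθ3 nφ' n₁3 : Fin 3 → ℝ)
    (hnθ3 : nθ3 = ![Real.cos θ * Real.cos φ, Real.cos θ * Real.sin φ, Real.sin θ])
    (hnφ' : nφ' = ![-Real.sin φ, Real.cos φ, 0])
    (hn₁3 : n₁3 =
      ![Real.sin (B * t / 2) * Real.sin φ + Real.cos (B * t / 2) * Real.sin θ * Real.cos φ,
        -(Real.sin (B * t / 2) * Real.cos φ) + Real.cos (B * t / 2) * Real.sin θ * Real.sin φ,
        -(Real.cos (B * t / 2) * Real.cos θ)]) :
    ∃ S : Matrix (Fin N) (Fin N) ℂ,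
      HasSum
        (fun m : ℕ =>
          ((Complex.I * (t : ℂ) * (B : ℂ)) ^ m / (Nat.factorial m : ℂ)) •
            (fun X => J nθ3 * X - X * J nθ3)^[m] (J nφ'))
        S
      ∧ S - J nφ' = ((2 * Real.sin (B * t / 2) : ℝ) : ℂ) • J n₁3 := by
  -- general commutator formula
  have hcomm : ∀ a b : Fin 3 → ℝ, J a * J b - J b * J a =
      ((a 1 * b 2 - a 2 * b 1 : ℝ) : ℂ) • (Complex.I • Jx)
    + ((a 2 * b 0 - a 0 * b 2 : ℝ) : ℂ) • (Complex.I • Jy)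
    + ((a 0 * b 1 - a 1 * b 0 : ℝ) : ℂ) • (Complex.I • Jz) := by
    intro a b
    rw [hJ, hJ, ← hxy, ← hyz, ← hzx]
    push_cast
    simp only [mul_add, add_mul, smul_mul_assoc, mul_smul_comm, smul_sub, smul_smul]
    module
  set A := J nθ3 with hA
  set Y := J nφ' with hY
  set m3 : Fin 3 → ℝ :=
    ![-(Real.sin θ * Real.cos φ), -(Real.sin θ * Real.sin φ), Real.cos θ] with hm3
  set Z := J m3 with hZ
  have pythφ : Complex.sin (φ:ℂ) ^ 2 + Complex.cos (φ:ℂ) ^ 2 = 1 := Complex.sin_sq_add_cos_sq _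
  have pythθ : Complex.sin (θ:ℂ) ^ 2 + Complex.cos (θ:ℂ) ^ 2 = 1 := Complex.sin_sq_add_cos_sq _
  have hAY : A * Y - Y * A = Complex.I • Z := by
    have h := hcomm nθ3 nφ'
    rw [hnθ3, hnφ'] at h
    simp only [Matrix.cons_val_zero, Matrix.cons_val_one, Matrix.head_cons,
      Matrix.cons_val_two, Matrix.tail_cons] at h
    rw [hA, hY, hnθ3, hnφ', h, hZ, hJ m3, hm3]
    simp only [Matrix.cons_val_zero, Matrix.cons_val_one, Matrix.head_cons,
      Matrix.cons_val_two, Matrix.tail_cons]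
    push_cast
    match_scalars
    · ring
    · ring
    · linear_combination Complex.cos (θ:ℂ) * Complex.I * pythφ
  have hAZ : A * Z - Z * A = (-Complex.I) • Y := by
    have h := hcomm nθ3 m3
    rw [hnθ3, hm3] at h
    simp only [Matrix.cons_val_zero, Matrix.cons_val_one, Matrix.head_cons,
      Matrix.cons_val_two, Matrix.tail_cons] at h
    rw [hA, hnθ3, h, hY, hJ nφ', hnφ']
    simp only [Matrix.cons_val_zero, Matrix.cons_val_one, Matrix.head_cons,
      Matrix.cons_val_two, Matrix.tail_cons]
    push_cast
    match_scalars
    · linear_combination Complex.sin (φ:ℂ) * Complex.I * pythθ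
    · linear_combination -Complex.cos (φ:ℂ) * Complex.I * pythθ
    · ring
  have hlin : ∀ (c d : ℂ) (P Q : Matrix (Fin N) (Fin N) ℂ),
      A * (c • P + d • Q) - (c • P + d • Q) * A
        = c • (A * P - P * A) + d • (A * Q - Q * A) := by
    intro c d P Q
    simp only [mul_add, add_mul, mul_smul_comm, smul_mul_assoc, smul_sub]
    abel
  set Up : Matrix (Fin N) (Fin N) ℂ := Y + Complex.I • Z with hUp
  set Um : Matrix (Fin N) (Fin N) ℂ := Y - Complex.I • Z with hUm
  have hImI : Complex.I * -Complex.I = 1 := by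
    simp [Complex.I_mul_I]
  have hU1 : A * Up - Up * A = Up := by
    have h := hlin 1 Complex.I Y Z
    simp only [one_smul] at h
    rw [hUp, h, hAY, hAZ, smul_smul, hImI, one_smul]
    abel
  have hU2 : A * Um - Um * A = -Um := by
    have h := hlin 1 (-Complex.I) Y Z
    simp only [one_smul, neg_smul, ← sub_eq_add_neg] at h
    rw [hUm, h, hAY, hAZ, smul_smul]
    rw [hImI, one_smul]
    abel
  have hf_iter : ∀ m : ℕ, (fun X => A * X - X * A)^[m] Y
      = ((1 : ℂ)/2) • Up + (((-1 : ℂ)) ^ m / 2) • Um := by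
    intro m
    induction m with
    | zero =>
      simp only [Function.iterate_zero, id_eq, pow_zero]
      rw [hUp, hUm]
      module
    | succ k ih =>
      rw [Function.iterate_succ_apply', ih]
      show A * _ - _ * A = _
      rw [hlin, hU1, hU2]
      match_scalars
      · ring
      · ring
  set w : ℂ := Complex.I * (t : ℂ) * (B : ℂ) with hw
  have h1 : HasSum (fun m : ℕ => (w ^ m / (Nat.factorial m : ℂ)) • (((1:ℂ)/2) • Up))
      (NormedSpace.exp w • (((1:ℂ)/2) • Up)) :=
    (NormedSpace.expSeries_div_hasSum_exp w).smul_const _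
  have h2 : HasSum (fun m : ℕ => ((-w) ^ m / (Nat.factorial m : ℂ)) • (((1:ℂ)/2) • Um))
      (NormedSpace.exp (-w) • (((1:ℂ)/2) • Um)) :=
    (NormedSpace.expSeries_div_hasSum_exp (-w)).smul_const _
  have hsum := h1.add h2
  have hfun : (fun m : ℕ =>
        (w ^ m / (Nat.factorial m : ℂ)) • (fun X => A * X - X * A)^[m] Y)
      = fun m : ℕ => (w ^ m / (Nat.factorial m : ℂ)) • (((1:ℂ)/2) • Up)
          + ((-w) ^ m / (Nat.factorial m : ℂ)) • (((1:ℂ)/2) • Um) := by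
    funext m
    rw [hf_iter m]
    simp only [smul_add, smul_smul]
    match_scalars <;> ring
  refine ⟨NormedSpace.exp w • (((1:ℂ)/2) • Up) + NormedSpace.exp (-w) • (((1:ℂ)/2) • Um),
    ?_, ?_⟩
  · rw [hfun]
    exact hsum
  · have e1 : NormedSpace.exp w
        = Complex.cos ((t:ℂ)*B) + Complex.sin ((t:ℂ)*B) * Complex.I := by
      rw [← Complex.exp_eq_exp_ℂ, show w = ((t:ℂ)*B) * Complex.I from by rw [hw]; ring,
        Complex.exp_mul_I]
    have e2 : NormedSpace.exp (-w)
        = Complex.cos ((t:ℂ)*B) - Complex.sin ((t:ℂ)*B) * Complex.I := by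
      rw [← Complex.exp_eq_exp_ℂ, show -w = (-((t:ℂ)*B)) * Complex.I from by rw [hw]; ring,
        Complex.exp_mul_I, Complex.cos_neg, Complex.sin_neg]
      ring
    have rcC : Complex.cos ((t:ℂ)*B) = 1 - 2 * Complex.sin ((B:ℂ)*(t:ℂ)/2) ^ 2 := by
      rw [show ((t:ℂ)*B) = 2*((B:ℂ)*(t:ℂ)/2) by ring]
      linear_combination Complex.cos_two_mul ((B:ℂ)*(t:ℂ)/2)
        + 2 * Complex.sin_sq_add_cos_sq ((B:ℂ)*(t:ℂ)/2)
    have rsC : Complex.sin ((t:ℂ)*B)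
        = 2 * Complex.sin ((B:ℂ)*(t:ℂ)/2) * Complex.cos ((B:ℂ)*(t:ℂ)/2) := by
      rw [show ((t:ℂ)*B) = 2*((B:ℂ)*(t:ℂ)/2) by ring]
      exact Complex.sin_two_mul _
    have hJn1 : J n₁3 = (-(Complex.sin ((B:ℂ)*(t:ℂ)/2))) • Y
        + (-(Complex.cos ((B:ℂ)*(t:ℂ)/2))) • Z := by
      rw [hJ n₁3, hn₁3, hY, hJ nφ', hnφ', hZ, hJ m3, hm3]
      simp only [Matrix.cons_val_zero, Matrix.cons_val_one, Matrix.head_cons,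
        Matrix.cons_val_two, Matrix.tail_cons]
      push_cast
      module
    rw [e1, e2, hJn1, hUp, hUm]
    push_cast
    match_scalars
    · linear_combination rcC
    · linear_combination (Complex.sin ((t:ℂ)*B)) * Complex.I_sq - rsC
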